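/- Let S and L be finite groups with S a normal subgroup of L, the quotient L/S solvable, and S simple non-abelian. Let n ≥ 1 and let G be a subgroup of L^n such that proj_i(G) contains S for every i ∈ {1,…,n}. Then G ∩ S^n is a product of subdiagonals of S^n: there exist an equivalence relation ∼ on {1,…,n} and automorphisms α_1, …, α_n of S such that an element g ∈ S^n belongs to G if and only if α_i^{-1}(g_i) = α_j^{-1}(g_j) for all i, j with i ∼ j. -/

import Mathlib

private lemma solvable_pi {Q : Type*} [Group Q] [Group.IsSolvable Q] :
    ∀ n : ℕ, Group.IsSolvable (Fin n → Q)
  | 0 => isSolvable_of_top_eq_bot _ (Subsingleton.elim _ _)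
  | (n+1) => by
    haveI := solvable_pi (Q := Q) n
    let f : (Fin (n+1) → Q) →* Q × (Fin n → Q) :=
      { toFun := fun x => (x 0, fun m => x m.succ),
        map_one' := rfl, map_mul' := fun _ _ => rfl }
    have hf : Function.Injective f := by
      intro x y hxy
      funext m
      refine Fin.cases ?_ ?_ m
      · exact congrArg Prod.fst hxy
      · intro m; exact congrFun (congrArg Prod.snd hxy) m
    exact solvable_of_solvable_injective hf

private lemma center_eq_bot' {Sg : Type*} [Group Sg] [IsSimpleGroup Sg]
    (hna : ∃ a b : Sg, a * b ≠ b * a) : Subgroup.center Sg = ⊥ := by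
  rcases (Subgroup.normal_of_characteristic (Subgroup.center Sg)).eq_bot_or_eq_top with h | h
  · exact h
  · exfalso
    obtain ⟨a, b, hab⟩ := hna
    have : b ∈ Subgroup.center Sg := h ▸ Subgroup.mem_top b
    exact hab ((Subgroup.mem_center_iff.mp this) a)

private lemma graph_aux {Sg : Type*} [Group Sg] [Finite Sg] {n : ℕ}
    (N : Subgroup (Fin n → Sg)) (H1 : ∀ (i : Fin n) (s : Sg), ∃ x ∈ N, x i = s)
    {i j : Fin n} (hij : ∀ x ∈ N, (x i = 1 ↔ x j = 1)) :
    ∃ φ : MulAut Sg, ∀ x ∈ N, x j = φ (x i) := by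
  classical
  have key : ∀ x ∈ N, ∀ y ∈ N, x i = y i → x j = y j := by
    intro x hx y hy hxy
    have hm : x⁻¹ * y ∈ N := mul_mem (inv_mem hx) hy
    have h1 : (x⁻¹ * y) i = 1 := by
      show (x i)⁻¹ * y i = 1
      rw [hxy, inv_mul_cancel]
    have h2 : (x⁻¹ * y) j = 1 := (hij _ hm).mp h1
    have : (x j)⁻¹ * y j = 1 := h2
    rw [inv_mul_eq_one] at this
    exact this
  choose F hFN hFi using fun s => H1 i s
  set f : Sg → Sg := fun s => F s j with hf
  have hfx : ∀ x ∈ N, f (x i) = x j := fun x hx =>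
    key _ (hFN _) _ hx (hFi _)
  have f1 : f 1 = 1 := by simpa using hfx 1 N.one_mem
  have fmul : ∀ a b : Sg, f (a * b) = f a * f b := by
    intro a b
    obtain ⟨x, hx, hxi⟩ := H1 i a
    obtain ⟨y, hy, hyi⟩ := H1 i b
    have h1 := hfx x hx
    have h2 := hfx y hy
    have h3 := hfx (x * y) (mul_mem hx hy)
    rw [hxi] at h1; rw [hyi] at h2
    have hxyi : (x * y) i = a * b := by rw [Pi.mul_apply, hxi, hyi]
    rw [hxyi, Pi.mul_apply] at h3
    rw [h3, h1, h2]
  let F' : Sg →* Sg := { toFun := f, map_one' := f1, map_mul' := fmul }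
  have hinj : Function.Injective F' := by
    rw [injective_iff_map_eq_one]
    intro a ha
    obtain ⟨x, hx, hxi⟩ := H1 i a
    have hxj : x j = 1 := by rw [← hfx x hx, hxi]; exact ha
    rw [← hxi]
    exact (hij x hx).mpr hxj
  refine ⟨MulEquiv.ofBijective F' ((Finite.injective_iff_bijective).mp hinj), ?_⟩
  intro x hx
  exact (hfx x hx).symm

private lemma pair_full {Sg : Type*} [Group Sg] [IsSimpleGroup Sg] {n : ℕ}
    (N : Subgroup (Fin n → Sg)) (H1 : ∀ (i : Fin n) (s : Sg), ∃ x ∈ N, x i = s)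
    {c d : Fin n} (hx : ∃ x ∈ N, x c = 1 ∧ x d ≠ 1) :
    ∀ a b : Sg, ∃ y ∈ N, y c = a ∧ y d = b := by
  classical
  set A : Subgroup Sg :=
    Subgroup.map (Pi.evalMonoidHom (fun _ => Sg) d)
      (N ⊓ (Pi.evalMonoidHom (fun _ => Sg) c).ker) with hA
  have hAn : A.Normal := by
    constructor
    intro a ha g
    rw [hA, Subgroup.mem_map] at ha
    obtain ⟨x, hx', rfl⟩ := ha
    rw [Subgroup.mem_inf, MonoidHom.mem_ker] at hx'
    obtain ⟨hxN, hxc⟩ := hx'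
    obtain ⟨y, hy, hyd⟩ := H1 d g
    rw [hA, Subgroup.mem_map]
    refine ⟨y * x * y⁻¹, Subgroup.mem_inf.mpr ⟨mul_mem (mul_mem hy hxN) (inv_mem hy), ?_⟩, ?_⟩
    · rw [MonoidHom.mem_ker]
      show y c * x c * (y c)⁻¹ = 1
      have hxc' : x c = 1 := hxc
      rw [hxc', mul_one, mul_inv_cancel]
    · show y d * x d * (y d)⁻¹ = g * x d * g⁻¹
      rw [hyd]
  have hAtop : A = ⊤ := by
    rcases hAn.eq_bot_or_eq_top with h | h
    · exfalso
      obtain ⟨x, hxN, hxc, hxd⟩ := hx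
      have : x d ∈ A := ⟨x, ⟨hxN, hxc⟩, rfl⟩
      rw [h, Subgroup.mem_bot] at this
      exact hxd this
    · exact h
  intro a b
  obtain ⟨y, hy, hyc⟩ := H1 c a
  have hmem : (y d)⁻¹ * b ∈ A := by rw [hAtop]; exact Subgroup.mem_top _
  rw [hA, Subgroup.mem_map] at hmem
  obtain ⟨z, hz', hzd⟩ := hmem
  rw [Subgroup.mem_inf, MonoidHom.mem_ker] at hz'
  obtain ⟨hzN, hzc⟩ := hz'
  refine ⟨y * z, mul_mem hy hzN, ?_, ?_⟩
  · show y c * z c = a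
    have hzc' : z c = 1 := hzc
    rw [hzc', mul_one, hyc]
  · show y d * z d = b
    have hzd' : z d = (y d)⁻¹ * b := hzd
    rw [hzd', mul_inv_cancel_left]

private lemma diag_elem {Sg : Type*} [Group Sg] [IsSimpleGroup Sg]
    (hna : ∃ a b : Sg, a * b ≠ b * a) {n : ℕ}
    (N : Subgroup (Fin n → Sg)) (H1 : ∀ (i : Fin n) (s : Sg), ∃ x ∈ N, x i = s)
    (c : Fin n) (s : Sg) :
    ∃ x ∈ N, x c = s ∧ ∀ j, ¬ (∀ y ∈ N, (y c = 1 ↔ y j = 1)) → x j = 1 := by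
  classical
  suffices H : ∀ T : Finset (Fin n), (∀ j ∈ T, ¬ (∀ y ∈ N, (y c = 1 ↔ y j = 1))) →
      ∀ s : Sg, ∃ x ∈ N, x c = s ∧ ∀ j ∈ T, x j = 1 by
    obtain ⟨x, hx, hxc, hxT⟩ :=
      H (Finset.univ.filter fun j => ¬ (∀ y ∈ N, (y c = 1 ↔ y j = 1)))
        (fun j hj => (Finset.mem_filter.mp hj).2) s
    exact ⟨x, hx, hxc, fun j hj => hxT j (Finset.mem_filter.mpr ⟨Finset.mem_univ j, hj⟩)⟩
  intro T
  induction T using Finset.induction_on with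
  | empty =>
    intro _ s
    obtain ⟨x, hx, hxc⟩ := H1 c s
    exact ⟨x, hx, hxc, fun j hj => absurd hj (Finset.notMem_empty j)⟩
  | @insert d T hdT IH =>
    intro hT s
    have hcd : ¬ (∀ y ∈ N, (y c = 1 ↔ y d = 1)) := hT d (Finset.mem_insert_self d T)
    have IH' := IH (fun j hj => hT j (Finset.mem_insert_of_mem hj))
    -- full projection on the pair (c, d)
    have hfull : ∀ a b : Sg, ∃ y ∈ N, y c = a ∧ y d = b := by
      push_neg at hcd
      obtain ⟨y, hy, hiff⟩ := hcd
      rcases hiff with ⟨h1, h2⟩ | ⟨h1, h2⟩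
      · exact pair_full N H1 ⟨y, hy, h1, h2⟩
      · have := pair_full N H1 (c := d) (d := c) ⟨y, hy, h2, h1⟩
        intro a b
        obtain ⟨z, hz, hz1, hz2⟩ := this b a
        exact ⟨z, hz, hz2, hz1⟩
    -- the subgroup of elements vanishing on T
    set MT : Subgroup (Fin n → Sg) :=
      N ⊓ ⨅ j ∈ T, (Pi.evalMonoidHom (fun _ => Sg) j).ker with hMTdef
    have hMTmem : ∀ x : Fin n → Sg, x ∈ MT ↔ x ∈ N ∧ ∀ j ∈ T, x j = 1 := by
      intro x
      simp [hMTdef, Subgroup.mem_inf, Subgroup.mem_iInf, MonoidHom.mem_ker]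
    have hMTc : ∀ t : Sg, ∃ x ∈ MT, x c = t := by
      intro t
      obtain ⟨x, hx, hxc, hxT⟩ := IH' t
      exact ⟨x, (hMTmem x).mpr ⟨hx, hxT⟩, hxc⟩
    have hconj : ∀ x ∈ MT, ∀ y ∈ N, y * x * y⁻¹ ∈ MT := by
      intro x hx y hy
      rw [hMTmem] at hx ⊢
      refine ⟨mul_mem (mul_mem hy hx.1) (inv_mem hy), fun j hj => ?_⟩
      show y j * x j * (y j)⁻¹ = 1
      rw [hx.2 j hj, mul_one, mul_inv_cancel]
    -- it suffices to find x ∈ MT with x c = s and x d = 1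
    suffices hS : ∃ x ∈ MT, x c = s ∧ x d = 1 by
      obtain ⟨x, hx, hxc, hxd⟩ := hS
      rw [hMTmem] at hx
      refine ⟨x, hx.1, hxc, fun j hj => ?_⟩
      rcases Finset.mem_insert.mp hj with rfl | hj
      · exact hxd
      · exact hx.2 j hj
    set Q1 : Subgroup Sg :=
      Subgroup.map (Pi.evalMonoidHom (fun _ => Sg) c)
        (MT ⊓ (Pi.evalMonoidHom (fun _ => Sg) d).ker) with hQ1def
    set Q2 : Subgroup Sg :=
      Subgroup.map (Pi.evalMonoidHom (fun _ => Sg) d)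
        (MT ⊓ (Pi.evalMonoidHom (fun _ => Sg) c).ker) with hQ2def
    have hQ1mem : ∀ t : Sg, t ∈ Q1 ↔ ∃ x ∈ MT, x c = t ∧ x d = 1 := by
      intro t
      rw [hQ1def, Subgroup.mem_map]
      constructor
      · rintro ⟨x, hx, rfl⟩
        rw [Subgroup.mem_inf, MonoidHom.mem_ker] at hx
        exact ⟨x, hx.1, rfl, hx.2⟩
      · rintro ⟨x, hx, hxc, hxd⟩
        exact ⟨x, Subgroup.mem_inf.mpr ⟨hx, MonoidHom.mem_ker.mpr hxd⟩, hxc⟩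
    have hQ2mem : ∀ t : Sg, t ∈ Q2 ↔ ∃ x ∈ MT, x d = t ∧ x c = 1 := by
      intro t
      rw [hQ2def, Subgroup.mem_map]
      constructor
      · rintro ⟨x, hx, rfl⟩
        rw [Subgroup.mem_inf, MonoidHom.mem_ker] at hx
        exact ⟨x, hx.1, rfl, hx.2⟩
      · rintro ⟨x, hx, hxd, hxc⟩
        exact ⟨x, Subgroup.mem_inf.mpr ⟨hx, MonoidHom.mem_ker.mpr hxc⟩, hxd⟩
    have hQ1n : Q1.Normal := by
      constructor
      intro a ha g
      rw [hQ1mem] at ha ⊢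
      obtain ⟨x, hx, hxc, hxd⟩ := ha
      obtain ⟨y, hy, hyc⟩ := H1 c g
      refine ⟨y * x * y⁻¹, hconj x hx y hy, ?_, ?_⟩
      · show y c * x c * (y c)⁻¹ = g * a * g⁻¹
        rw [hyc, hxc]
      · show y d * x d * (y d)⁻¹ = 1
        rw [hxd, mul_one, mul_inv_cancel]
    have hQ2n : Q2.Normal := by
      constructor
      intro a ha g
      rw [hQ2mem] at ha ⊢
      obtain ⟨x, hx, hxd, hxc⟩ := ha
      obtain ⟨y, hy, hyd⟩ := H1 d g
      refine ⟨y * x * y⁻¹, hconj x hx y hy, ?_, ?_⟩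
      · show y d * x d * (y d)⁻¹ = g * a * g⁻¹
        rw [hyd, hxd]
      · show y c * x c * (y c)⁻¹ = 1
        rw [hxc, mul_one, mul_inv_cancel]
    rcases hQ1n.eq_bot_or_eq_top with hQ1 | hQ1
    · rcases hQ2n.eq_bot_or_eq_top with hQ2 | hQ2
      · -- both bot : every element of MT has trivial d coordinate
        have hd1 : ∀ x ∈ MT, x d = 1 := by
          intro x hx
          have hcen : ∀ b : Sg, b * x d = x d * b := by
            intro b
            obtain ⟨y, hy, hyc, hyd⟩ := hfull 1 b
            have hz : y * x * y⁻¹ ∈ MT := hconj x hx y hy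
            have hw : x⁻¹ * (y * x * y⁻¹) ∈ MT := mul_mem (inv_mem hx) hz
            have hwc : (x⁻¹ * (y * x * y⁻¹)) c = 1 := by
              show (x c)⁻¹ * (y c * x c * (y c)⁻¹) = 1
              rw [hyc]; group
            have hwd : (x⁻¹ * (y * x * y⁻¹)) d ∈ Q2 := by
              rw [hQ2mem]
              exact ⟨_, hw, rfl, hwc⟩
            rw [hQ2, Subgroup.mem_bot] at hwd
            have h5 : (x d)⁻¹ * (y d * x d * (y d)⁻¹) = 1 := hwd
            rw [hyd] at h5
            have h6 : x d = b * x d * b⁻¹ := inv_mul_eq_one.mp h5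
            nth_rewrite 2 [h6]
            group
          have : x d ∈ Subgroup.center Sg := Subgroup.mem_center_iff.mpr hcen
          rw [center_eq_bot' hna, Subgroup.mem_bot] at this
          exact this
        obtain ⟨x, hx, hxc⟩ := hMTc s
        exact ⟨x, hx, hxc, hd1 x hx⟩
      · -- Q2 = ⊤
        obtain ⟨x, hx, hxc⟩ := hMTc s
        have : (x d)⁻¹ ∈ Q2 := by rw [hQ2]; exact Subgroup.mem_top _
        rw [hQ2mem] at this
        obtain ⟨z, hz, hzd, hzc⟩ := this
        refine ⟨x * z, mul_mem hx hz, ?_, ?_⟩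
        · show x c * z c = s
          rw [hzc, mul_one, hxc]
        · show x d * z d = 1
          rw [hzd, mul_inv_cancel]
    · -- Q1 = ⊤
      have : s ∈ Q1 := by rw [hQ1]; exact Subgroup.mem_top _
      rw [hQ1mem] at this
      exact this

private theorem subdirect {Sg : Type*} [Group Sg] [Finite Sg] [IsSimpleGroup Sg]
    (hna : ∃ a b : Sg, a * b ≠ b * a) {n : ℕ} (N : Subgroup (Fin n → Sg))
    (H1 : ∀ (i : Fin n) (s : Sg), ∃ x ∈ N, x i = s) :
    ∃ (r : Setoid (Fin n)) (α : Fin n → MulAut Sg),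
      ∀ g : Fin n → Sg,
        (g ∈ N ↔ ∀ i j : Fin n, r.r i j → (α i).symm (g i) = (α j).symm (g j)) := by
  classical
  set rel : Fin n → Fin n → Prop := fun i j => ∀ x ∈ N, (x i = 1 ↔ x j = 1) with hreldef
  have hrefl : ∀ i, rel i i := fun i x _ => Iff.rfl
  have hsymm : ∀ {i j}, rel i j → rel j i := fun h x hx => (h x hx).symm
  have htrans : ∀ {i j k}, rel i j → rel j k → rel i k :=
    fun h1 h2 x hx => (h1 x hx).trans (h2 x hx)
  set r : Setoid (Fin n) := ⟨rel, ⟨hrefl, hsymm, htrans⟩⟩ with hrdef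
  have hrr : ∀ i j, r.r i j ↔ rel i j := fun i j => Iff.rfl
  set rep : Fin n → Fin n := fun i => (Quotient.mk r i).out with hrepdef
  have hrepr : ∀ i, rel (rep i) i := fun i => Quotient.mk_out i
  have hrepeq : ∀ {i j}, rel i j → rep i = rep j := by
    intro i j hij
    show (Quotient.mk r i).out = (Quotient.mk r j).out
    rw [Quotient.sound (hij : r.r i j)]
  have hreprep : ∀ i, rep (rep i) = rep i := fun i => hrepeq (hrepr i)
  have hα : ∀ i, ∃ φ : MulAut Sg, ∀ x ∈ N, x i = φ (x (rep i)) := by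
    intro i
    obtain ⟨φ, hφ⟩ := graph_aux N H1 (hrepr i)
    exact ⟨φ, hφ⟩
  choose α hαspec using hα
  -- α at a representative is the identity
  have hid : ∀ i t, α (rep i) t = t := by
    intro i t
    obtain ⟨x, hx, hxi⟩ := H1 (rep i) t
    have := hαspec (rep i) x hx
    rw [hreprep i, hxi] at this
    exact this.symm
  refine ⟨r, α, fun g => ⟨?_, ?_⟩⟩
  · intro hg i j hij
    have hi : g i = α i (g (rep i)) := hαspec i g hg
    have hj : g j = α j (g (rep j)) := hαspec j g hg
    have hije : rep i = rep j := hrepeq hij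
    rw [hi, hj, hije, MulEquiv.symm_apply_apply, MulEquiv.symm_apply_apply]
  · intro hg
    have hgi : ∀ i, g i = α i (g (rep i)) := by
      intro i
      have h1 := hg (rep i) i (hrepr i)
      have h2 : (α (rep i)).symm (g (rep i)) = g (rep i) := by
        apply (α (rep i)).injective
        rw [MulEquiv.apply_symm_apply, hid]
      rw [h2] at h1
      rw [h1, MulEquiv.apply_symm_apply]
    have main : ∀ R : Finset (Quotient r), ∃ x ∈ N,
        (∀ i, (Quotient.mk r i) ∈ R → x i = g i) ∧
        (∀ i, (Quotient.mk r i) ∉ R → x i = 1) := by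
      intro R
      induction R using Finset.induction_on with
      | empty =>
        exact ⟨1, one_mem N, fun i hi => absurd hi (Finset.notMem_empty _),
          fun i _ => rfl⟩
      | @insert q R hq IHR =>
        obtain ⟨x, hx, hx1, hx2⟩ := IHR
        obtain ⟨y, hy, hyc, hyj⟩ := diag_elem hna N H1 q.out (g q.out)
        have key1 : ∀ i, Quotient.mk r i = q → y i = g i := by
          intro i hi
          have hrel : rel q.out i := by
            have : Quotient.mk r q.out = Quotient.mk r i := by
              rw [hi, Quotient.out_eq]
            exact Quotient.exact this
          have hrepi : rep i = q.out := by
            show (Quotient.mk r i).out = q.out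
            rw [hi]
          have := hαspec i y hy
          rw [hrepi] at this
          rw [this, hyc]
          rw [hgi i, hrepi]
        have key2 : ∀ i, Quotient.mk r i ≠ q → y i = 1 := by
          intro i hi
          apply hyj
          intro hrel
          apply hi
          rw [← Quotient.out_eq q]
          exact Quotient.sound (hsymm hrel)
        refine ⟨x * y, mul_mem hx hy, ?_, ?_⟩
        · intro i hi
          rcases Finset.mem_insert.mp hi with hi | hi
          · show x i * y i = g i
            rw [hx2 i (by rw [hi]; exact hq), key1 i hi, one_mul]
          · show x i * y i = g i
            rw [hx1 i hi, key2 i (by intro h; exact hq (h ▸ hi)), mul_one]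
        · intro i hi
          rw [Finset.mem_insert, not_or] at hi
          show x i * y i = 1
          rw [hx2 i hi.2, key2 i hi.1, one_mul]
    obtain ⟨x, hx, hx1, _⟩ := main Finset.univ
    have : x = g := funext fun i => hx1 i (Finset.mem_univ _)
    rwa [this] at hx

/-- Let `S ⊴ L` be finite groups with `L/S` solvable and `S` simple
non-abelian. Let `n ≥ 1` and `G ≤ Lⁿ` with `S ≤ proj_i(G)` for all `i`. Then `G ∩ Sⁿ`
is a product of subdiagonals of `Sⁿ`: there are an equivalence relation `∼` on `{1,…,n}`
and automorphisms `α₁,…,αₙ` of `S` such that an element `g ∈ Sⁿ` belongs to `G` iff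
`(α i)⁻¹ (g i) = (α j)⁻¹ (g j)` for all `i ∼ j`. -/
theorem stmt_2 {L : Type*} [Group L] [Finite L] (S : Subgroup L) [S.Normal]
    [IsSimpleGroup S] (hna : ∃ a b : S, a * b ≠ b * a)
    (hsolv : IsSolvable (L ⧸ S))
    {n : ℕ} (hn : 1 ≤ n) (G : Subgroup (Fin n → L))
    (h : ∀ i : Fin n, S ≤ Subgroup.map (Pi.evalMonoidHom (fun _ => L) i) G) :
    ∃ (r : Setoid (Fin n)) (α : Fin n → MulAut S),
      ∀ g : Fin n → S,
        ((fun i => (g i : L)) ∈ G ↔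
          ∀ i j : Fin n, r.r i j → (α i).symm (g i) = (α j).symm (g j)) := by
  classical
  let ι : (Fin n → S) →* (Fin n → L) :=
    { toFun := fun g i => (g i : L), map_one' := rfl, map_mul' := fun _ _ => rfl }
  set N : Subgroup (Fin n → S) := G.comap ι with hNdef
  have Hnosolv : ¬ IsSolvable S := by
    intro hs
    obtain ⟨a, b, hab⟩ := hna
    exact hab (IsSimpleGroup.comm_iff_isSolvable.mpr hs a b)
  have H1 : ∀ (i : Fin n) (s : S), ∃ x ∈ N, x i = s := by
    intro i
    set K : Subgroup S := N.map (Pi.evalMonoidHom (fun _ => S) i) with hKdef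
    have hKn : K.Normal := by
      constructor
      intro a ha g
      rw [hKdef, Subgroup.mem_map] at ha
      obtain ⟨x, hx, rfl⟩ := ha
      obtain ⟨y, hy, hyi⟩ := h i g.2
      have hw : y * ι x * y⁻¹ ∈ G := mul_mem (mul_mem hy hx) (inv_mem hy)
      have hcoord : ∀ m, (y * ι x * y⁻¹) m ∈ S := by
        intro m
        show y m * (x m : L) * (y m)⁻¹ ∈ S
        exact ‹S.Normal›.conj_mem _ (x m).2 (y m)
      set z : Fin n → S := fun m => ⟨(y * ι x * y⁻¹) m, hcoord m⟩ with hzdef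
      have hz : z ∈ N := by
        show ι z ∈ G
        have : ι z = y * ι x * y⁻¹ := rfl
        rw [this]; exact hw
      rw [hKdef, Subgroup.mem_map]
      refine ⟨z, hz, ?_⟩
      show z i = g * x i * g⁻¹
      apply Subtype.ext
      show y i * (x i : L) * (y i)⁻¹ = (g : L) * (x i : L) * (g : L)⁻¹
      rw [show y i = (g : L) from hyi]
    rcases hKn.eq_bot_or_eq_top with hK | hK
    · exfalso
      -- solvability contradiction
      let Φ : G →* (Fin n → L ⧸ S) :=
        { toFun := fun g m => QuotientGroup.mk ((g : Fin n → L) m),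
          map_one' := rfl, map_mul' := fun _ _ => rfl }
      let ψ : G →* L := (Pi.evalMonoidHom (fun _ => L) i).comp G.subtype
      have hker : ∀ x : G, x ∈ Φ.ker → ψ x = 1 := by
        intro x hx
        have hx' : Φ x = 1 := hx
        have hxm : ∀ m, ((x : Fin n → L) m) ∈ S := by
          intro m
          have : QuotientGroup.mk ((x : Fin n → L) m) = (1 : L ⧸ S) := congrFun hx' m
          exact (QuotientGroup.eq_one_iff _).mp this
        set z : Fin n → S := fun m => ⟨(x : Fin n → L) m, hxm m⟩ with hzdef
        have hz : z ∈ N := by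
          show ι z ∈ G
          have : ι z = (x : Fin n → L) := rfl
          rw [this]; exact x.2
        have hzi : z i ∈ K := by
          rw [hKdef, Subgroup.mem_map]; exact ⟨z, hz, rfl⟩
        rw [hK, Subgroup.mem_bot] at hzi
        show (x : Fin n → L) i = 1
        have := congrArg (fun t : S => (t : L)) hzi
        exact this
      haveI : Group.IsSolvable (Fin n → L ⧸ S) := @solvable_pi _ _ hsolv n
      haveI : Group.IsSolvable (G ⧸ Φ.ker) :=
        solvable_of_solvable_injective (QuotientGroup.kerLift_injective Φ)
      let ψ' : G ⧸ Φ.ker →* L := QuotientGroup.lift Φ.ker ψ hker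
      have hsub : S ≤ ψ'.range := by
        intro a ha
        obtain ⟨y, hy, hyi⟩ := h i ha
        exact ⟨QuotientGroup.mk (⟨y, hy⟩ : G), hyi⟩
      haveI : Group.IsSolvable ψ'.range := solvable_of_surjective ψ'.rangeRestrict_surjective
      have : Group.IsSolvable S :=
        solvable_of_solvable_injective (Subgroup.inclusion_injective hsub)
      exact Hnosolv this
    · intro s
      have : s ∈ K := by rw [hK]; exact Subgroup.mem_top _
      rw [hKdef, Subgroup.mem_map] at this
      obtain ⟨x, hx, hxi⟩ := this
      exact ⟨x, hx, hxi⟩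
  obtain ⟨r, α, hch⟩ := subdirect hna N H1
  refine ⟨r, α, fun g => ?_⟩
  have hmem : (fun i => (g i : L)) ∈ G ↔ g ∈ N := Iff.rfl
  rw [hmem]
  exact hch g
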